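/- The function I₁ = 1/v₀ + 1/v₁ + 1/v₂ + 1/v₃ + 1/v₄ - v₂ is a Casimir of the Poisson bracket on ℝ⁵ with structure matrix Ω having nonzero entries Ω₁₃ = -v₀²v₂², Ω₁₄ = v₀²v₃², Ω₁₅ = v₀²v₂²v₄², Ω₂₄ = -v₁²v₃², Ω₂₅ = v₁²v₄², Ω₃₅ = -v₂²v₄²; i.e., Ω · (∇I₁)ᵀ = 0. -/

import Mathlib

open Matrix

/-- The structure matrix of the KdV (3,-2) reduction. -/
noncomputable def kdvOmega (v : Fin 5 → ℝ) : Matrix (Fin 5) (Fin 5) ℝ :=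
  !![0, 0, -(v 0)^2*(v 2)^2, (v 0)^2*(v 3)^2, (v 0)^2*(v 2)^2*(v 4)^2;
     0, 0, 0, -(v 1)^2*(v 3)^2, (v 1)^2*(v 4)^2;
     (v 0)^2*(v 2)^2, 0, 0, 0, -(v 2)^2*(v 4)^2;
     -(v 0)^2*(v 3)^2, (v 1)^2*(v 3)^2, 0, 0, 0;
     -(v 0)^2*(v 2)^2*(v 4)^2, -(v 1)^2*(v 4)^2, (v 2)^2*(v 4)^2, 0, 0]

/-- The integral I₁ of the KdV reduction. -/
noncomputable def kdvI1 (v : Fin 5 → ℝ) : ℝ :=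
  1 / v 0 + 1 / v 1 + 1 / v 2 + 1 / v 3 + 1 / v 4 - v 2

/-- Gradient of a function on ℝ⁵ (vector of partial derivatives). -/
noncomputable def grad (f : (Fin 5 → ℝ) → ℝ) (v : Fin 5 → ℝ) : Fin 5 → ℝ :=
  fun l => deriv (fun t => f (Function.update v l t)) (v l)

lemma deriv_aux1 (a : ℝ) {x : ℝ} (hx : x ≠ 0) :
    deriv (fun t : ℝ => 1 / t + a) x = -(1 / x ^ 2) := by
  have : HasDerivAt (fun t : ℝ => 1 / t + a) (-(1 / x ^ 2)) x := by
    simpa [one_div] using (hasDerivAt_inv hx).add_const a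
  exact this.deriv

lemma deriv_aux2 (a : ℝ) {x : ℝ} (hx : x ≠ 0) :
    deriv (fun t : ℝ => 1 / t + a - t) x = -(1 / x ^ 2) - 1 := by
  have : HasDerivAt (fun t : ℝ => 1 / t + a - t) (-(1 / x ^ 2) - 1) x := by
    simpa [one_div] using ((hasDerivAt_inv hx).add_const a).fun_sub (hasDerivAt_id' x)
  exact this.deriv

/-- I₁ is a Casimir of the KdV Poisson structure: Ω · ∇I₁ = 0. -/
theorem kdvI1_casimir (v : Fin 5 → ℝ) (h : ∀ i, v i ≠ 0) :
    kdvOmega v *ᵥ grad kdvI1 v = 0 := by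
  have g0 : grad kdvI1 v 0 = -(1 / (v 0) ^ 2) := by
    have e : (fun t => kdvI1 (Function.update v 0 t))
        = fun t => 1 / t + (1 / v 1 + 1 / v 2 + 1 / v 3 + 1 / v 4 - v 2) := by
      funext t; simp [kdvI1, Function.update]; ring
    rw [grad, e, deriv_aux1 _ (h 0)]
  have g1 : grad kdvI1 v 1 = -(1 / (v 1) ^ 2) := by
    have e : (fun t => kdvI1 (Function.update v 1 t))
        = fun t => 1 / t + (1 / v 0 + 1 / v 2 + 1 / v 3 + 1 / v 4 - v 2) := by
      funext t; simp [kdvI1, Function.update]; ring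
    rw [grad, e, deriv_aux1 _ (h 1)]
  have g2 : grad kdvI1 v 2 = -(1 / (v 2) ^ 2) - 1 := by
    have e : (fun t => kdvI1 (Function.update v 2 t))
        = fun t => 1 / t + (1 / v 0 + 1 / v 1 + 1 / v 3 + 1 / v 4) - t := by
      funext t; simp [kdvI1, Function.update]; ring
    rw [grad, e, deriv_aux2 _ (h 2)]
  have g3 : grad kdvI1 v 3 = -(1 / (v 3) ^ 2) := by
    have e : (fun t => kdvI1 (Function.update v 3 t))
        = fun t => 1 / t + (1 / v 0 + 1 / v 1 + 1 / v 2 + 1 / v 4 - v 2) := by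
      funext t; simp [kdvI1, Function.update]; ring
    rw [grad, e, deriv_aux1 _ (h 3)]
  have g4 : grad kdvI1 v 4 = -(1 / (v 4) ^ 2) := by
    have e : (fun t => kdvI1 (Function.update v 4 t))
        = fun t => 1 / t + (1 / v 0 + 1 / v 1 + 1 / v 2 + 1 / v 3 - v 2) := by
      funext t; simp [kdvI1, Function.update]; ring
    rw [grad, e, deriv_aux1 _ (h 4)]
  funext i
  fin_cases i <;>
    simp [kdvOmega, mulVec, dotProduct, Fin.sum_univ_five, g0, g1, g2, g3, g4] <;>
    field_simp [h 0, h 1, h 2, h 3, h 4] <;> ring
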